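/- arXiv:1208.1799 — 2 statements merged into one kernel-verified Lean document; each statement's English description precedes it below -/
import Mathlib

section
/- Let V be a finite-dimensional complex vector space, G ⊆ GL(V) finite, γ ∈ GL(V) of finite order normalising G, ζ a root of unity, E = V(γ, ζ), and X a subspace with γX = X. Suppose there exists h in the pointwise stabiliser G_X of X such that the ζ-eigenspace of γh on the quotient V/X is zero. Then E ∩ X = V(γh, ζ). -/
/-- if `γX = X`, `h ∈ G_X` and the ζ-eigenspace of `γh` on `V/X` is zero
(i.e. `(γh)v - ζv ∈ X → v ∈ X`), then `V(γ,ζ) ∩ X = V(γh,ζ)`. -/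
theorem stmt_4 (V : Type*) [AddCommGroup V] [Module ℂ V] [FiniteDimensional ℂ V]
    (G : Subgroup (V ≃ₗ[ℂ] V)) [Finite G]
    (γ : V ≃ₗ[ℂ] V) (hord : IsOfFinOrder γ) (hγ : γ ∈ Subgroup.normalizer (G : Set (V ≃ₗ[ℂ] V)))
    (ζ : ℂ) (hζ : ∃ n : ℕ, 0 < n ∧ ζ ^ n = 1)
    (X : Submodule ℂ V) (hX : X.map (↑γ : V →ₗ[ℂ] V) = X)
    (h : V ≃ₗ[ℂ] V) (hhG : h ∈ G) (hfix : ∀ x ∈ X, h x = x)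
    (hquot : ∀ v : V, (γ * h) v - ζ • v ∈ X → v ∈ X) :
    Module.End.eigenspace (↑γ : Module.End ℂ V) ζ ⊓ X =
      Module.End.eigenspace (↑(γ * h) : Module.End ℂ V) ζ := by
  ext v
  simp only [Submodule.mem_inf, Module.End.mem_eigenspace_iff]
  constructor
  · rintro ⟨h1, h2⟩
    have : h v = v := hfix v h2
    show γ (h v) = ζ • v
    rw [this]; exact h1
  · intro hv
    have hv2 : (γ * h) v = ζ • v := hv
    have hvX : v ∈ X := hquot v (by rw [hv2, sub_self]; exact X.zero_mem)
    refine ⟨?_, hvX⟩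
    have : h v = v := hfix v hvX
    have hv' : γ (h v) = ζ • v := hv
    rwa [this] at hv'
end

section
/- Let V = V₁ ⊕ γV₁ ⊕ ... ⊕ γ^{k-1}V₁ be a finite-dimensional complex vector space where γ ∈ GL(V) cyclically permutes the summands γ^i V₁ and γ^k V₁ = V₁. Let x = x₁ ⊕ γx₂γ⁻¹ ⊕ ... ⊕ γ^{k-1}x_kγ^{-(k-1)} where x_i ∈ GL(V₁) act on V₁. Then for any root of unity ζ, the map sending v = v₁ + γv₂ + ... + γ^{k-1}v_k (v_i ∈ V₁) to v₁ restricts to a vector space isomorphism V(γx, ζ) ≅ V₁(γ^k x_k x_{k-1}···x₁, ζ^k). -/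
/-- in the cyclic decomposition `V = V₁ ⊕ γV₁ ⊕ ⋯ ⊕ γ^{k-1}V₁`
(coordinatised as `Fin k → V₁`, with `g` the restriction of `γ^k` to `V₁`, and with
`γx` acting by `(γx)(v₁ + γv₂ + ⋯ + γ^{k-1}v_k) = γ^k x_k v_k + γ x₁ v₁ + ⋯ + γ^{k-1} x_{k-1} v_{k-1}`,
encoded by the operator `T`), the map `v ↦ v₁` restricts to a vector space isomorphism
`V(γx, ζ) ≅ V₁(γ^k x_k ⋯ x₁, ζ^k)`. -/
theorem stmt_8 (k : ℕ) (hk : 0 < k) (V₁ : Type*) [AddCommGroup V₁] [Module ℂ V₁]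
    [FiniteDimensional ℂ V₁]
    (g : V₁ ≃ₗ[ℂ] V₁) (x : Fin k → (V₁ ≃ₗ[ℂ] V₁))
    (ζ : ℂ) (hζ : ∃ n : ℕ, 0 < n ∧ ζ ^ n = 1)
    (T : Module.End ℂ (Fin k → V₁))
    (hT : ∀ (v : Fin k → V₁) (i : Fin k), T v i =
      if (i : ℕ) = 0 then
        g (x ⟨k - 1, by omega⟩ (v ⟨k - 1, by omega⟩))
      else
        x ⟨(i : ℕ) - 1, by exact lt_of_le_of_lt (Nat.sub_le _ _) i.isLt⟩
          (v ⟨(i : ℕ) - 1, by exact lt_of_le_of_lt (Nat.sub_le _ _) i.isLt⟩)) :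
    ∃ e : Module.End.eigenspace T ζ ≃ₗ[ℂ]
        Module.End.eigenspace
          (↑(g * (List.ofFn x).reverse.prod) : Module.End ℂ V₁) (ζ ^ k),
      ∀ v, (e v : V₁) = (v : Fin k → V₁) ⟨0, hk⟩ := by
  classical
  obtain ⟨n, hn, hζn⟩ := hζ
  have hζ0 : ζ ≠ 0 := by
    intro h; rw [h, zero_pow hn.ne'] at hζn; exact zero_ne_one hζn
  -- partial products
  set P : ℕ → (V₁ ≃ₗ[ℂ] V₁) := fun i => ((List.ofFn x).take i).reverse.prod with hP
  have hP0 : P 0 = 1 := by simp [hP]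
  have hPsucc : ∀ i (hi : i < k), P (i + 1) = x ⟨i, hi⟩ * P i := by
    intro i hi
    have : (List.ofFn x).take (i+1) = (List.ofFn x).take i ++ [x ⟨i, hi⟩] := by
      rw [List.take_succ]; simp [List.ofFnNthVal, hi]
    simp [hP, this]
  have hPk : (List.ofFn x).reverse.prod = P k := by
    rw [hP]
    congr 2
    exact (List.take_of_length_le (by simp)).symm
  have hEapp : ∀ w : V₁,
      (↑(g * (List.ofFn x).reverse.prod) : Module.End ℂ V₁) w = g (P k w) := by
    intro w; rw [hPk]; rfl
  -- key identity for eigenvectors of T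
  have keyA : ∀ (v : Fin k → V₁), T v = ζ • v →
      ∀ i (hi : i < k), ζ ^ i • v ⟨i, hi⟩ = P i (v ⟨0, hk⟩) := by
    intro v hv i
    induction i with
    | zero => intro hi; simp [hP0]
    | succ j ih =>
      intro hi
      have hj : j < k := by omega
      have h1 : T v ⟨j+1, hi⟩ = ζ • v ⟨j+1, hi⟩ := by rw [hv]; rfl
      rw [hT] at h1
      simp only [Nat.succ_ne_zero, if_false, Nat.add_sub_cancel] at h1
      calc ζ ^ (j+1) • v ⟨j+1, hi⟩ = ζ ^ j • (ζ • v ⟨j+1, hi⟩) := by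
            rw [smul_smul, ← pow_succ]
        _ = ζ ^ j • x ⟨j, hj⟩ (v ⟨j, hj⟩) := by rw [← h1]
        _ = x ⟨j, hj⟩ (ζ ^ j • v ⟨j, hj⟩) := by rw [map_smul]
        _ = x ⟨j, hj⟩ (P j (v ⟨0, hk⟩)) := by rw [ih hj]
        _ = P (j+1) (v ⟨0, hk⟩) := by rw [hPsucc j hj]; rfl
  have keyB : ∀ (v : Fin k → V₁), T v = ζ • v →
      ζ ^ k • v ⟨0, hk⟩ = g (P k (v ⟨0, hk⟩)) := by
    intro v hv
    have hk1 : k - 1 < k := by omega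
    have h0 : T v ⟨0, hk⟩ = ζ • v ⟨0, hk⟩ := by rw [hv]; rfl
    rw [hT] at h0
    have h0' : g (x ⟨k-1, hk1⟩ (v ⟨k-1, hk1⟩)) = ζ • v ⟨0, hk⟩ := by simpa using h0
    have hA := keyA v hv (k - 1) hk1
    have hPk' : P k = x ⟨k-1, hk1⟩ * P (k-1) := by
      have := hPsucc (k-1) hk1
      rwa [Nat.sub_add_cancel hk] at this
    calc ζ ^ k • v ⟨0, hk⟩ = ζ ^ (k-1) • (ζ • v ⟨0, hk⟩) := by
          rw [smul_smul, ← pow_succ, Nat.sub_add_cancel hk]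
      _ = ζ ^ (k-1) • g (x ⟨k-1, hk1⟩ (v ⟨k-1, hk1⟩)) := by rw [← h0']
      _ = g (x ⟨k-1, hk1⟩ (ζ ^ (k-1) • v ⟨k-1, hk1⟩)) := by rw [map_smul, map_smul]
      _ = g (x ⟨k-1, hk1⟩ (P (k-1) (v ⟨0, hk⟩))) := by rw [hA]
      _ = g (P k (v ⟨0, hk⟩)) := by rw [hPk']; rfl
  -- the forward linear map
  have fmem : ∀ v : Module.End.eigenspace T ζ,
      ((v : Fin k → V₁) ⟨0, hk⟩) ∈ Module.End.eigenspace
        (↑(g * (List.ofFn x).reverse.prod) : Module.End ℂ V₁) (ζ ^ k) := by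
    intro v
    rw [Module.End.mem_eigenspace_iff, hEapp]
    have hv : T (v : Fin k → V₁) = ζ • (v : Fin k → V₁) :=
      Module.End.mem_eigenspace_iff.mp v.2
    exact (keyB _ hv).symm
  let F : Module.End.eigenspace T ζ →ₗ[ℂ]
      Module.End.eigenspace
        (↑(g * (List.ofFn x).reverse.prod) : Module.End ℂ V₁) (ζ ^ k) :=
    { toFun := fun v => ⟨(v : Fin k → V₁) ⟨0, hk⟩, fmem v⟩
      map_add' := by intro a b; rfl
      map_smul' := by intro c a; rfl }
  have hinj : Function.Injective F := by
    rw [injective_iff_map_eq_zero]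
    intro v hv0
    have h0 : (v : Fin k → V₁) ⟨0, hk⟩ = 0 := congrArg Subtype.val hv0
    have hv : T (v : Fin k → V₁) = ζ • (v : Fin k → V₁) :=
      Module.End.mem_eigenspace_iff.mp v.2
    have : (v : Fin k → V₁) = 0 := by
      funext i
      have := keyA _ hv i i.isLt
      rw [h0, map_zero] at this
      have hzi : ζ ^ (i : ℕ) ≠ 0 := pow_ne_zero _ hζ0
      have := smul_eq_zero.mp this
      simpa [hzi, Fin.eta] using this
    exact Subtype.ext this
  have hsurj : Function.Surjective F := by
    rintro ⟨w, hw⟩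
    rw [Module.End.mem_eigenspace_iff, hEapp] at hw
    set vf : Fin k → V₁ := fun i => (ζ⁻¹) ^ (i : ℕ) • P (i : ℕ) w with hvf
    have hvf0 : vf ⟨0, hk⟩ = w := by simp [hvf, hP0]
    have hTvf : T vf = ζ • vf := by
      funext i
      rw [hT]
      by_cases h0 : (i : ℕ) = 0
      · rw [if_pos h0]
        have hk1 : k - 1 < k := by omega
        have hPk' : P k = x ⟨k-1, hk1⟩ * P (k-1) := by
          have := hPsucc (k-1) hk1
          rwa [Nat.sub_add_cancel hk] at this
        have : vf ⟨k-1, hk1⟩ = (ζ⁻¹) ^ (k-1) • P (k-1) w := rfl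
        rw [this, map_smul, map_smul]
        have hx : g (x ⟨k-1, hk1⟩ (P (k-1) w)) = g (P k w) := by rw [hPk']; rfl
        rw [hx, hw]
        have hi0 : i = ⟨0, hk⟩ := Fin.ext h0
        have hs : ζ⁻¹ ^ (k-1) * ζ ^ k = ζ := by
          have hkk : ζ ^ k = ζ ^ (k-1) * ζ := by rw [← pow_succ, Nat.sub_add_cancel hk]
          rw [hkk, ← mul_assoc, ← mul_pow, inv_mul_cancel₀ hζ0, one_pow, one_mul]
        rw [Pi.smul_apply, hi0, hvf0, smul_smul, hs]
      · rw [if_neg h0]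
        obtain ⟨j, hj⟩ : ∃ j, (i : ℕ) = j + 1 := ⟨(i : ℕ) - 1, by omega⟩
        have hjk : j < k := by omega
        have h1 : (⟨(i : ℕ) - 1, lt_of_le_of_lt (Nat.sub_le _ _) i.isLt⟩ : Fin k)
            = ⟨j, hjk⟩ := by simp [hj]
        rw [h1]
        have : vf ⟨j, hjk⟩ = (ζ⁻¹) ^ j • P j w := rfl
        rw [this, map_smul]
        have hx : x ⟨j, hjk⟩ (P j w) = P (j+1) w := by rw [hPsucc j hjk]; rfl
        rw [hx, Pi.smul_apply]
        have : vf i = (ζ⁻¹) ^ (j+1) • P (j+1) w := by rw [hvf]; simp [hj]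
        rw [this, smul_smul]
        congr 1
        field_simp [pow_succ]
        rw [pow_succ, mul_comm ζ, mul_assoc, one_div, inv_mul_cancel₀ hζ0, mul_one]
    refine ⟨⟨vf, Module.End.mem_eigenspace_iff.mpr hTvf⟩, ?_⟩
    exact Subtype.ext hvf0
  refine ⟨LinearEquiv.ofBijective F ⟨hinj, hsurj⟩, fun v => ?_⟩
  rfl
end
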